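/- arXiv:1306.3632 — 2 statements merged into one kernel-verified Lean document; each statement's English description precedes it below -/
import Mathlib

section
/- With notation as before, if all p_i have even degree, then Q equals diag(F_{q^2}^×) · ∏_i (F_{q^2}^×)^2, where F_{q^2}^× is viewed inside each F_{p_i}^× via the unique subfield F_{q^2} ⊆ F_{p_i}, diag denotes the diagonal embedding, and (F_{q^2}^×)^2 the subgroup of squares. Consequently (A/n)^×/Q is isomorphic to ∏_{i=1}^s (Z/((q^{deg p_i}−1)/(q^2−1))Z) when q is even, and to ∏_{i=1}^s (Z/(2(q^{deg p_i}−1)/(q^2−1))Z) modulo the diagonally embedded Z/2Z when q is odd. -/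
open Polynomial in
lemma range_eq_pow_card {A B : Type*} [Field A] [Field B] [Fintype A] [Fintype B]
    (f : A →+* B) (y : B) : y ∈ Set.range f ↔ y ^ Fintype.card A = y := by
  classical
  constructor
  · rintro ⟨x, rfl⟩
    rw [← map_pow, FiniteField.pow_card]
  · intro hy
    obtain ⟨n, hn⟩ : ∃ m, m = Fintype.card A := ⟨_, rfl⟩
    rw [← hn] at hy
    have hn2 : 2 ≤ n := hn ▸ Fintype.one_lt_card
    let T : Finset B := Finset.univ.filter fun z => z ^ n = z
    let R : Finset B := Finset.univ.image f
    have hRT : R ⊆ T := by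
      intro z hz
      simp only [R, Finset.mem_image] at hz
      obtain ⟨x, -, rfl⟩ := hz
      simp only [T, Finset.mem_filter, Finset.mem_univ, true_and]
      rw [← map_pow, hn, FiniteField.pow_card]
    have hp0 : (X ^ n - X : B[X]) ≠ 0 := by
      intro h
      have h2 := congrArg (fun p => Polynomial.coeff p n) h
      simp only [Polynomial.coeff_sub, Polynomial.coeff_X_pow, Polynomial.coeff_X,
        Polynomial.coeff_zero, if_pos rfl, if_neg (by omega : ¬ (1:ℕ) = n)] at h2
      norm_num at h2
    have hTcard : T.card ≤ n := by
      have hsub : T ⊆ (X ^ n - X : B[X]).roots.toFinset := by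
        intro z hz
        simp only [T, Finset.mem_filter, Finset.mem_univ, true_and] at hz
        rw [Multiset.mem_toFinset, Polynomial.mem_roots hp0]
        simp [Polynomial.IsRoot, sub_eq_zero, hz]
      calc T.card ≤ _ := Finset.card_le_card hsub
        _ ≤ Multiset.card (X ^ n - X : B[X]).roots := Multiset.toFinset_card_le _
        _ ≤ (X ^ n - X : B[X]).natDegree := Polynomial.card_roots' _
        _ ≤ n := by
            refine le_trans (Polynomial.natDegree_sub_le _ _) ?_
            simp only [Polynomial.natDegree_X_pow, Polynomial.natDegree_X, max_le_iff]
            omega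
    have hcardR : R.card = n := by
      simp only [R]
      rw [Finset.card_image_of_injective Finset.univ f.injective, Finset.card_univ, hn]
    have hTR : T = R := (Finset.eq_of_subset_of_card_le hRT (by rw [hcardR]; exact hTcard)).symm
    have hyT : y ∈ T := by simp [T, hy]
    rw [hTR] at hyT
    simp only [R, Finset.mem_image] at hyT
    obtain ⟨x, -, h⟩ := hyT
    exact ⟨x, h⟩


lemma units_range_iff {A B : Type*} [Field A] [Field B] [Fintype A] [Fintype B]
    (f : A →+* B) (x : Bˣ) :
    (∃ u : Aˣ, Units.map f.toMonoidHom u = x) ↔ x ^ (Fintype.card A - 1) = 1 := by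
  classical
  constructor
  · rintro ⟨u, rfl⟩
    rw [← map_pow]
    have hu : u ^ (Fintype.card A - 1) = 1 := by
      rw [← Fintype.card_units]; exact pow_card_eq_one
    rw [hu, map_one]
  · intro h
    have h1 : (x : B) ^ (Fintype.card A - 1) = 1 := by
      have := congrArg Units.val h
      simpa using this
    have hy : (x : B) ^ Fintype.card A = (x : B) := by
      have hA : Fintype.card A - 1 + 1 = Fintype.card A := by
        have : 2 ≤ Fintype.card A := Fintype.one_lt_card
        omega
      calc (x : B) ^ Fintype.card A = (x : B) ^ (Fintype.card A - 1) * x := by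
            rw [← pow_succ, hA]
        _ = x := by rw [h1, one_mul]
    obtain ⟨a, ha⟩ := (range_eq_pow_card f _).2 hy
    have ha0 : a ≠ 0 := by
      rintro rfl; rw [map_zero] at ha; exact (Units.ne_zero x) ha.symm
    exact ⟨Units.mk0 a ha0, Units.ext (by simpa using ha)⟩

lemma sq_of_pow_eq_one {G : Type*} [Group G] [Fintype G] [IsCyclic G]
    {x : G} {k e : ℕ} (he : 2 ∣ e) (hc : Fintype.card G = k * e) (hx : x ^ k = 1) :
    ∃ y : G, y ^ 2 = x := by
  obtain ⟨g, hg⟩ := IsCyclic.exists_generator (α := G)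
  obtain ⟨j, rfl⟩ : ∃ j : ℕ, g ^ j = x := by
    obtain ⟨j, hj⟩ := mem_powers_iff_mem_zpowers.2 (hg x)
    exact ⟨j, hj⟩
  have horder : orderOf g = k * e := by
    rw [orderOf_eq_card_of_forall_mem_zpowers hg, Nat.card_eq_fintype_card, hc]
  have hk0 : 0 < k := by
    rcases Nat.eq_zero_or_pos k with rfl | h
    · have hpos : (0:ℕ) < 0 * e := hc ▸ Fintype.card_pos
      simp at hpos
    · exact h
  have hdvd : k * e ∣ j * k := by
    rw [← horder]
    exact orderOf_dvd_of_pow_eq_one (by rw [pow_mul]; exact hx)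
  have hej : e ∣ j := by
    have h2 : k * e ∣ k * j := by rwa [mul_comm j k] at hdvd
    exact (mul_dvd_mul_iff_left hk0.ne').1 h2
  obtain ⟨j2, hj2⟩ : 2 ∣ j := dvd_trans he hej
  exact ⟨g ^ j2, by rw [← pow_mul, mul_comm, ← hj2]⟩

lemma sq_of_odd_card {G : Type*} [Group G] [Fintype G]
    (h : ¬ 2 ∣ Fintype.card G) (x : G) : ∃ y : G, y ^ 2 = x := by
  set c := Fintype.card G with hc
  have hcop : Nat.Coprime 2 c := (Nat.prime_two.coprime_iff_not_dvd).2 h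
  have hbez : (1 : ℤ) = 2 * Nat.gcdA 2 c + c * Nat.gcdB 2 c := by
    have := Nat.gcd_eq_gcd_ab 2 c
    rwa [hcop] at this
  refine ⟨x ^ Nat.gcdA 2 c, ?_⟩
  have hxc : x ^ (c : ℤ) = 1 := by
    rw [zpow_natCast]; exact pow_card_eq_one
  have h2 : (x ^ Nat.gcdA 2 c) ^ (2:ℕ) = x ^ ((2:ℤ) * Nat.gcdA 2 c) := by
    rw [← zpow_natCast (x ^ Nat.gcdA 2 c) 2, ← zpow_mul, mul_comm]
    norm_num
  have h3 : x ^ ((2:ℤ) * Nat.gcdA 2 c + (c:ℤ) * Nat.gcdB 2 c) = x ^ ((2:ℤ) * Nat.gcdA 2 c) := by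
    rw [zpow_add, zpow_mul x (c:ℤ), hxc, one_zpow, mul_one]
  rw [h2, ← h3, ← hbez, zpow_one]

lemma exists_hom_zmod (G : Type*) [CommGroup G] [Fintype G] [IsCyclic G] (k d : ℕ)
    (hk : 0 < k) (hd : 0 < d) (hcard : Nat.card G = k * d) :
    ∃ f : G →* Multiplicative (ZMod k), Function.Surjective f ∧
      ∀ x : G, f x = 1 ↔ x ^ d = 1 := by
  haveI : NeZero k := ⟨hk.ne'⟩
  haveI : NeZero (Nat.card G) := ⟨by rw [hcard]; positivity⟩
  have hdvd : k ∣ Nat.card G := ⟨d, hcard⟩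
  let e : Multiplicative (ZMod (Nat.card G)) ≃* G :=
    zmodCyclicMulEquiv inferInstance
  let cast : ZMod (Nat.card G) →+* ZMod k := ZMod.castHom hdvd (ZMod k)
  let f : G →* Multiplicative (ZMod k) :=
    (AddMonoidHom.toMultiplicative cast.toAddMonoidHom).comp e.symm.toMonoidHom
  have hcast : ∀ z : ZMod (Nat.card G), cast z = 0 ↔ k ∣ z.val := by
    intro z
    rw [show (cast z : ZMod k) = ((z.val : ℕ) : ZMod k) by
      rw [ZMod.castHom_apply, ← ZMod.natCast_val]]
    exact (ZMod.natCast_eq_zero_iff _ _)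
  refine ⟨f, ?_, ?_⟩
  · intro y
    refine ⟨e (Multiplicative.ofAdd ((Multiplicative.toAdd y).val : ZMod (Nat.card G))), ?_⟩
    show (AddMonoidHom.toMultiplicative cast.toAddMonoidHom) (e.symm (e _)) = y
    rw [e.symm_apply_apply]
    show Multiplicative.ofAdd (cast _) = y
    simp only [toAdd_ofAdd, map_natCast]
    rw [ZMod.natCast_rightInverse (Multiplicative.toAdd y)]
    simp
  · intro x
    have h1 : f x = 1 ↔ cast (Multiplicative.toAdd (e.symm x)) = 0 := by
      constructor
      · intro h
        have := congrArg Multiplicative.toAdd h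
        simpa [f] using this
      · intro h
        show Multiplicative.ofAdd (cast (Multiplicative.toAdd (e.symm x))) = 1
        rw [h]; rfl
    have h2 : x ^ d = 1 ↔ (d : ZMod (Nat.card G)) * Multiplicative.toAdd (e.symm x) = 0 := by
      calc x ^ d = 1 ↔ e.symm (x ^ d) = 1 := e.symm.map_eq_one_iff.symm
        _ ↔ (e.symm x) ^ d = 1 := by rw [map_pow]
        _ ↔ (d : ZMod (Nat.card G)) * Multiplicative.toAdd (e.symm x) = 0 := by
            rw [show ((e.symm x) ^ d = 1) ↔
              (Multiplicative.toAdd ((e.symm x) ^ d) = 0) from Iff.rfl, toAdd_pow,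
              nsmul_eq_mul]
    rw [h1, h2]
    set z := Multiplicative.toAdd (e.symm x) with hz
    have hmul : (d : ZMod (Nat.card G)) * z = (((d * z.val : ℕ)) : ZMod (Nat.card G)) := by
      push_cast
      rw [ZMod.natCast_val, ZMod.cast_id]
    rw [hcast, hmul, ZMod.natCast_eq_zero_iff]
    obtain ⟨zv, hzv⟩ : ∃ m, z.val = m := ⟨_, rfl⟩
    rw [hzv, hcard]
    constructor
    · rintro ⟨t, rfl⟩
      exact ⟨t, by ring⟩
    · rintro ⟨t, ht⟩
      have h3 : d * zv = d * (k * t) := by rw [ht]; ring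
      exact ⟨t, Nat.eq_of_mul_eq_mul_left hd h3⟩

set_option maxHeartbeats 1000000 in
/-- Product-of-residue-fields (CRT) model of the even-degree case.  `F = 𝔽_q`,
`E = 𝔽_{q²}` a quadratic extension, and `K i = 𝔽_{p_i}` the residue fields, each
containing `E` (this is exactly the condition that all `deg pᵢ` are even).
`Q` is the subgroup of `∏ᵢ (K i)ˣ` generated by the simultaneous roots of
quadratics `x² - t x + κ` with `t ∈ F`, `κ ∈ Fˣ`.  Then
`Q = diag(Eˣ) · ∏ᵢ (Eˣ)²`, and the quotient `(∏ᵢ (K i)ˣ)/Q` is isomorphic to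
`∏ᵢ ℤ/((|K i|−1)/(q²−1))` for even `q`, and to
`(∏ᵢ ℤ/(2(|K i|−1)/(q²−1)))/diag(ℤ/2)` for odd `q`. -/
theorem stmt_4 (F E : Type*) [Field F] [Fintype F] [Field E] [Fintype E]
    (ι : F →+* E) (hE : Fintype.card E = Fintype.card F ^ 2)
    (s : ℕ) (hs : 0 < s)
    (K : Fin s → Type*) [∀ i, Field (K i)] [∀ i, Fintype (K i)]
    (g : ∀ i, E →+* K i)
    (Q : Subgroup (∀ i, (K i)ˣ))
    (hQ : Q = Subgroup.closure {a : ∀ i, (K i)ˣ |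
      ∃ t κ : F, κ ≠ 0 ∧ ∀ i,
        (a i : K i) ^ 2 - g i (ι t) * (a i : K i) + g i (ι κ) = 0}) :
    ((Q : Set (∀ i, (K i)ˣ)) =
      {a : ∀ i, (K i)ˣ | ∃ α : Eˣ, ∃ β : Fin s → Eˣ, ∀ i,
        a i = Units.map (g i).toMonoidHom (α * (β i) ^ 2)}) ∧
    (Even (Fintype.card F) →
      Nonempty ((∀ i, (K i)ˣ) ⧸ Q ≃*
        Multiplicative (∀ i, ZMod ((Fintype.card (K i) - 1) / (Fintype.card F ^ 2 - 1))))) ∧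
    (Odd (Fintype.card F) →
      Nonempty ((∀ i, (K i)ˣ) ⧸ Q ≃*
        Multiplicative
          ((∀ i, ZMod (2 * ((Fintype.card (K i) - 1) / (Fintype.card F ^ 2 - 1)))) ⧸
            AddSubgroup.closure {fun i =>
              (((Fintype.card (K i) - 1) / (Fintype.card F ^ 2 - 1) : ℕ) :
                ZMod (2 * ((Fintype.card (K i) - 1) / (Fintype.card F ^ 2 - 1))))}))) := by
  classical
  obtain ⟨p, hpF⟩ := CharP.exists F
  haveI := hpF
  obtain ⟨fdim, hp, hcardF⟩ := FiniteField.card F p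
  haveI : Fact p.Prime := ⟨hp⟩
  haveI hchE : CharP E p := charP_of_injective_ringHom ι.injective p
  have hchK : ∀ i, CharP (K i) p := fun i => charP_of_injective_ringHom (g i).injective p
  set q := Fintype.card F with hqdef
  have hq2 : 2 ≤ q := Fintype.one_lt_card
  have hq0 : q ≠ 0 := by omega
  -- Frobenius additivity
  have hfrobE : ∀ x y : E, (x + y) ^ q = x ^ q + y ^ q := by
    intro x y; rw [hcardF]; exact add_pow_char_pow x y p fdim
  -- power card identities
  have hpowE : ∀ x : E, x ^ (q * q) = x := fun x => by
    rw [show q * q = q ^ 2 from (sq q).symm, ← hE]; exact FiniteField.pow_card x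
  have hrangeι : ∀ y : E, (∃ t : F, ι t = y) ↔ y ^ q = y := fun y => by
    rw [show (∃ t : F, ι t = y) ↔ y ∈ Set.range ι from Iff.rfl, range_eq_pow_card]
  have hrangeg : ∀ i (y : K i), (∃ z : E, g i z = y) ↔ y ^ (q * q) = y := fun i y => by
    rw [show (∃ z : E, g i z = y) ↔ y ∈ Set.range (g i) from Iff.rfl, range_eq_pow_card, hE,
      sq]
  -- units
  let GH : ∀ i, Eˣ →* (K i)ˣ := fun i => Units.map (g i).toMonoidHom
  have hunit : ∀ i (x : (K i)ˣ), (∃ u : Eˣ, GH i u = x) ↔ x ^ (q ^ 2 - 1) = 1 := fun i x => by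
    have := units_range_iff (g i) x; rwa [hE] at this
  have hcE : Fintype.card Eˣ = q ^ 2 - 1 := by rw [Fintype.card_units, hE]
  have hpowEu : ∀ u : Eˣ, u ^ (q ^ 2 - 1) = 1 := fun u => by
    rw [← hcE]; exact pow_card_eq_one
  -- every Frobenius-fixed unit is a square
  have hSQ : ∀ u : Eˣ, ((u : E)) ^ q = u → ∃ w : Eˣ, w ^ 2 = u := by
    intro u hu
    have huq : u ^ q = u := Units.ext (by rw [Units.val_pow_eq_pow_val]; exact hu)
    have hu1 : u ^ (q - 1) = 1 := by
      have hq1 : q - 1 + 1 = q := by omega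
      have h2 : u ^ (q - 1) * u = u ^ q := by rw [← pow_succ, hq1]
      have h3 : u ^ (q - 1) * u = 1 * u := by rw [h2, huq, one_mul]
      exact mul_right_cancel h3
    rcases Nat.even_or_odd q with hev | hod
    · apply sq_of_odd_card
      rw [hcE]
      obtain ⟨r, hr⟩ := hev
      have hqq : q ^ 2 = 2 * (2 * r * r) := by rw [hr]; ring
      have hq4 : 4 ≤ q ^ 2 := by nlinarith
      omega
    · obtain ⟨rr, hrr⟩ := hod
      refine sq_of_pow_eq_one (k := q - 1) (e := q + 1) ⟨rr + 1, by omega⟩ ?_ hu1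
      rw [hcE]
      have h1q2 : 1 ≤ q ^ 2 := by nlinarith
      zify [show 1 ≤ q from by omega, h1q2]
      ring
  -- membership of generators
  have hSmem : ∀ a : ∀ i, (K i)ˣ, (∃ t κ : F, κ ≠ 0 ∧ ∀ i,
      ((a i : K i)) ^ 2 - g i (ι t) * (a i : K i) + g i (ι κ) = 0) → a ∈ Q := by
    intro a ha; rw [hQ]; exact Subgroup.subset_closure ha
  have hmix : ∀ (ε : Fin s → Eˣ) (u u' : Eˣ),
      ((u : E) + u') ^ q = (u : E) + u' → (((u : E) * u') ^ q = (u : E) * u') →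
      (∀ j, ε j = u ∨ ε j = u') → (fun j => GH j (ε j)) ∈ Q := by
    intro ε u u' hsum hprod hroots
    apply hSmem
    obtain ⟨t, ht⟩ := (hrangeι _).2 hsum
    obtain ⟨κ, hκ⟩ := (hrangeι _).2 hprod
    refine ⟨t, κ, ?_, ?_⟩
    · intro h0
      rw [h0, map_zero] at hκ
      exact mul_ne_zero (Units.ne_zero u) (Units.ne_zero u') hκ.symm
    · intro j
      show (((GH j (ε j) : (K j)ˣ)) : K j) ^ 2 - g j (ι t) * _ + g j (ι κ) = 0
      have hval : (((GH j (ε j) : (K j)ˣ)) : K j) = g j (ε j) := rfl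
      rw [hval, ht, hκ, ← map_pow, ← map_mul, ← map_sub, ← map_add,
        show ((ε j : E)) ^ 2 - ((u : E) + u') * (ε j) + (u : E) * u'
          = ((ε j : E) - u) * ((ε j : E) - u') from by ring]
      rcases hroots j with h | h <;> rw [h] <;> simp
  have hdiag : ∀ u : Eˣ, (fun j => GH j u) ∈ Q := by
    intro u
    have hvq : ((u ^ q : Eˣ) : E) = (u : E) ^ q := Units.val_pow_eq_pow_val u q
    have hsum : ((u : E) + ((u ^ q : Eˣ) : E)) ^ q = (u : E) + ((u ^ q : Eˣ) : E) := by
      rw [hvq, hfrobE, ← pow_mul, hpowE, add_comm]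
    have hprod : ((u : E) * ((u ^ q : Eˣ) : E)) ^ q = (u : E) * ((u ^ q : Eˣ) : E) := by
      rw [hvq, mul_pow, ← pow_mul, hpowE, mul_comm]
    exact hmix (fun _ => u) u (u ^ q) hsum hprod (fun j => Or.inl rfl)
  have hsing : ∀ (i : Fin s) (u u' : Eˣ),
      ((u : E) + u') ^ q = (u : E) + u' → (((u : E) * u') ^ q = (u : E) * u') →
      Pi.mulSingle i (GH i (u' * u⁻¹)) ∈ Q := by
    intro i u u' hsum hprod
    have hmem1 := hmix (fun j => if j = i then u' else u) u u' hsum hprod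
      (fun j => by by_cases h : j = i <;> simp [h])
    have hmem2 := hdiag u
    have key : Pi.mulSingle i (GH i (u' * u⁻¹))
        = (fun j => GH j (if j = i then u' else u)) * (fun j => GH j u)⁻¹ := by
      funext j
      by_cases h : j = i
      · subst h; simp [map_mul, map_inv]
      · simp [Pi.mulSingle_eq_of_ne h, if_neg h]
    rw [key]
    exact mul_mem hmem1 (inv_mem hmem2)
  have hsq_mem : ∀ (i : Fin s) (w : Eˣ), Pi.mulSingle i (GH i (w ^ 2)) ∈ Q := by
    intro i w
    let emb : Eˣ →* ∀ j, (K j)ˣ :=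
      (MonoidHom.mulSingle (fun j => (K j)ˣ) i).comp (GH i)
    let P : Subgroup Eˣ := Q.comap emb
    have hPmem : ∀ v : Eˣ, v ∈ P ↔ Pi.mulSingle i (GH i v) ∈ Q := fun v => Iff.rfl
    suffices h : w ^ 2 ∈ P from (hPmem _).1 h
    have hfix : ∀ v : Eˣ, (v : E) ^ q = v → v ∈ P := by
      intro v hvq
      rw [hPmem]
      have hsum : ((1 : Eˣ) : E) + (v : E) = ((1 : E) + v) := rfl
      have h1 : (((1 : Eˣ) : E) + v) ^ q = ((1 : Eˣ) : E) + v := by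
        rw [Units.val_one, hfrobE, one_pow, hvq]
      have h2 : ((((1 : Eˣ)) : E) * v) ^ q = (((1 : Eˣ)) : E) * v := by
        rw [Units.val_one, one_mul, hvq]
      have := hsing i 1 v h1 h2
      simpa using this
    have hfrob : ∀ v : Eˣ, v ^ q * v⁻¹ ∈ P := by
      intro v
      rw [hPmem]
      have hvq : ((v ^ q : Eˣ) : E) = (v : E) ^ q := Units.val_pow_eq_pow_val v q
      have h1 : ((v : E) + ((v ^ q : Eˣ) : E)) ^ q = (v : E) + ((v ^ q : Eˣ) : E) := by
        rw [hvq, hfrobE, ← pow_mul, hpowE, add_comm]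
      have h2 : ((v : E) * ((v ^ q : Eˣ) : E)) ^ q = (v : E) * ((v ^ q : Eˣ) : E) := by
        rw [hvq, mul_pow, ← pow_mul, hpowE, mul_comm]
      exact hsing i v (v ^ q) h1 h2
    obtain ⟨γ, hγ⟩ := IsCyclic.exists_generator (α := Eˣ)
    have hγq1 : γ ^ ((q : ℤ) - 1) ∈ P := by
      have h := hfrob γ
      rwa [show γ ^ q * γ⁻¹ = γ ^ ((q : ℤ) - 1) from by
        rw [zpow_sub, zpow_natCast, zpow_one]] at h
    have hγq2 : γ ^ ((q : ℤ) + 1) ∈ P := by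
      have hfixval : ((γ ^ (q + 1) : Eˣ) : E) ^ q = ((γ ^ (q + 1) : Eˣ) : E) := by
        rw [Units.val_pow_eq_pow_val, ← pow_mul,
          show (q + 1) * q = q * q + q from by ring, pow_add, hpowE, ← pow_succ']
      have h := hfix (γ ^ (q + 1)) hfixval
      rwa [show γ ^ (q + 1) = γ ^ ((q : ℤ) + 1) from by
        rw [← zpow_natCast]; push_cast; ring_nf] at h
    have hγd : γ ^ ((Int.gcd ((q : ℤ) - 1) ((q : ℤ) + 1) : ℤ)) ∈ P := by
      rw [show ((Int.gcd ((q : ℤ) - 1) ((q : ℤ) + 1) : ℤ))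
          = ((q : ℤ) - 1) * Int.gcdA ((q : ℤ) - 1) ((q : ℤ) + 1)
            + ((q : ℤ) + 1) * Int.gcdB ((q : ℤ) - 1) ((q : ℤ) + 1) from
        Int.gcd_eq_gcd_ab _ _]
      rw [zpow_add, zpow_mul, zpow_mul]
      exact mul_mem (Subgroup.zpow_mem P hγq1 _) (Subgroup.zpow_mem P hγq2 _)
    have hd2 : ((Int.gcd ((q : ℤ) - 1) ((q : ℤ) + 1) : ℤ)) ∣ 2 := by
      have h1 : ((Int.gcd ((q : ℤ) - 1) ((q : ℤ) + 1) : ℤ)) ∣ ((q : ℤ) + 1) - ((q : ℤ) - 1) :=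
        dvd_sub (Int.gcd_dvd_right _ _) (Int.gcd_dvd_left _ _)
      rwa [show ((q : ℤ) + 1) - ((q : ℤ) - 1) = 2 from by ring] at h1
    obtain ⟨evar, he⟩ := hd2
    have hγ2 : γ ^ (2 : ℤ) ∈ P := by
      rw [he, zpow_mul]
      exact Subgroup.zpow_mem P hγd _
    obtain ⟨j, hj⟩ := Subgroup.mem_zpowers_iff.mp (hγ w)
    have hw2 : w ^ (2 : ℕ) = (γ ^ (2 : ℤ)) ^ j := by
      rw [← hj, ← zpow_natCast (γ ^ j) 2, ← zpow_mul, ← zpow_mul, mul_comm]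
      norm_num
    rw [hw2]
    exact Subgroup.zpow_mem P hγ2 j
  -- D ⊆ Q
  have hD_in_Q : {a : ∀ i, (K i)ˣ | ∃ α : Eˣ, ∃ β : Fin s → Eˣ, ∀ i,
      a i = Units.map (g i).toMonoidHom (α * (β i) ^ 2)} ⊆ (Q : Set (∀ i, (K i)ˣ)) := by
    rintro a ⟨α, β, ha⟩
    have hform : a = (fun j => GH j α) * ∏ i : Fin s, Pi.mulSingle i (GH i ((β i) ^ 2)) := by
      funext j
      rw [Pi.mul_apply, ha j,
        show (∏ i : Fin s, Pi.mulSingle i (GH i ((β i) ^ 2)))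
          = fun i => GH i ((β i) ^ 2) from Finset.univ_prod_mulSingle _]
      exact map_mul (GH j) α ((β j) ^ 2)
    rw [hform]
    exact mul_mem (hdiag α) (prod_mem (fun i _ => hsq_mem i (β i)))
  -- the subgroup D
  let Dsub : Subgroup (∀ i, (K i)ˣ) :=
  { carrier := {a : ∀ i, (K i)ˣ | ∃ α : Eˣ, ∃ β : Fin s → Eˣ, ∀ i,
      a i = Units.map (g i).toMonoidHom (α * (β i) ^ 2)}
    one_mem' := ⟨1, 1, fun i => by simp⟩
    mul_mem' := by
      rintro a b ⟨α, β, ha⟩ ⟨α', β', hb⟩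
      exact ⟨α * α', fun i => β i * β' i, fun i => by
        rw [Pi.mul_apply, ha i, hb i, ← map_mul]
        congr 1
        rw [mul_pow, mul_mul_mul_comm]⟩
    inv_mem' := by
      rintro a ⟨α, β, ha⟩
      exact ⟨α⁻¹, fun i => (β i)⁻¹, fun i => by
        rw [Pi.inv_apply, ha i, ← map_inv]
        congr 1
        rw [mul_inv, inv_pow]⟩ }
  -- S ⊆ D
  have hS_in_D : {a : ∀ i, (K i)ˣ | ∃ t κ : F, κ ≠ 0 ∧ ∀ i,
      (a i : K i) ^ 2 - g i (ι t) * (a i : K i) + g i (ι κ) = 0} ⊆ (Dsub : Set _) := by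
    rintro a ⟨t, κ, hκ0, hroot⟩
    have hεex : ∀ i, ∃ z : E, g i z = ((a i : (K i)ˣ) : K i) := by
      intro i
      haveI := hchK i
      apply (hrangeg i _).2
      set y := ((a i : (K i)ˣ) : K i) with hy
      have hrel : y ^ 2 - g i (ι t) * y + g i (ι κ) = 0 := hroot i
      have ht'q : (g i (ι t)) ^ q = g i (ι t) := by
        rw [← map_pow, ← map_pow, FiniteField.pow_card]
      have hκ'q : (g i (ι κ)) ^ q = g i (ι κ) := by
        rw [← map_pow, ← map_pow, FiniteField.pow_card]
      have hpqs : ∀ z w : K i, (z - w) ^ q = z ^ q - w ^ q := by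
        intro z w; rw [hcardF]; exact sub_pow_char_pow z w fdim
      have hpqa : ∀ z w : K i, (z + w) ^ q = z ^ q + w ^ q := by
        intro z w; rw [hcardF]; exact add_pow_char_pow z w p fdim
      have hroot2 : (y ^ q) ^ 2 - g i (ι t) * (y ^ q) + g i (ι κ) = 0 := by
        have h0 : (y ^ 2 - g i (ι t) * y + g i (ι κ)) ^ q = 0 := by
          rw [hrel]; exact zero_pow hq0
        calc (y ^ q) ^ 2 - g i (ι t) * (y ^ q) + g i (ι κ)
            = (y ^ 2) ^ q - (g i (ι t) * y) ^ q + (g i (ι κ)) ^ q := by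
              rw [mul_pow, ht'q, hκ'q, pow_right_comm]
          _ = (y ^ 2 - g i (ι t) * y + g i (ι κ)) ^ q := by rw [hpqa, hpqs]
          _ = 0 := h0
      have hfac : (y ^ q - y) * (y ^ q - (g i (ι t) - y)) = 0 := by
        linear_combination hroot2 - hrel
      rcases mul_eq_zero.1 hfac with h | h
      · have h1 : y ^ q = y := sub_eq_zero.1 h
        rw [pow_mul, h1, h1]
      · have h1 : y ^ q = g i (ι t) - y := sub_eq_zero.1 h
        rw [pow_mul, h1, hpqs, ht'q, h1]
        ring
    choose ε hε using hεex
    have hεrel : ∀ i, (ε i) ^ 2 - ι t * (ε i) + ι κ = 0 := by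
      intro i
      apply (g i).injective
      rw [map_zero, map_add, map_sub, map_mul, map_pow, hε i]
      exact hroot i
    have hrne : ε ⟨0, hs⟩ ≠ 0 := by
      intro h
      have h2 := hε ⟨0, hs⟩
      rw [h, map_zero] at h2
      exact Units.ne_zero (a ⟨0, hs⟩) h2.symm
    set r := ε ⟨0, hs⟩ with hrdef
    have hrrel : r ^ 2 - ι t * r + ι κ = 0 := hεrel ⟨0, hs⟩
    have hcase : ∀ i, ε i = r ∨ ε i = ι t - r := by
      intro i
      have h0 : (ε i - r) * (ε i - (ι t - r)) = 0 := by
        linear_combination hεrel i - hrrel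
      rcases mul_eq_zero.1 h0 with h | h
      · exact Or.inl (sub_eq_zero.1 h)
      · exact Or.inr (sub_eq_zero.1 h)
    have hκE : ι κ ≠ 0 := fun h => hκ0 (ι.injective (by rw [h, map_zero]))
    obtain ⟨w, hw⟩ : ∃ w : Eˣ, w ^ 2 = Units.mk0 (ι κ) hκE := by
      apply hSQ
      rw [Units.val_mk0, ← map_pow, FiniteField.pow_card]
    have hwv : (w : E) ^ 2 = ι κ := by
      rw [← Units.val_pow_eq_pow_val, hw, Units.val_mk0]
    refine ⟨Units.mk0 r hrne, fun i => if ε i = r then 1 else w * (Units.mk0 r hrne)⁻¹,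
      fun i => Units.ext ?_⟩
    show ((a i : (K i)ˣ) : K i) = g i _
    rw [← hε i]
    congr 1
    beta_reduce
    by_cases h : ε i = r
    · rw [if_pos h, h]
      simp
    · rw [if_neg h]
      rcases hcase i with h' | h'
      · exact absurd h' h
      · rw [h']
        rw [Units.val_mul, Units.val_pow_eq_pow_val, Units.val_mul, Units.val_mk0,
          Units.val_inv_eq_inv_val, Units.val_mk0, mul_pow, hwv]
        have h9 : ι κ = r * (ι t - r) := by linear_combination hrrel
        rw [h9]
        field_simp
  have part1 : (Q : Set (∀ i, (K i)ˣ)) =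
      {a : ∀ i, (K i)ˣ | ∃ α : Eˣ, ∃ β : Fin s → Eˣ, ∀ i,
        a i = Units.map (g i).toMonoidHom (α * (β i) ^ 2)} := by
    refine Set.Subset.antisymm ?_ hD_in_Q
    intro a ha
    rw [hQ] at ha
    exact (Subgroup.closure_le Dsub).2 hS_in_D ha
    -- cardinality facts
  have hGHinj : ∀ i, Function.Injective (GH i) := by
    intro i a b hab
    exact Units.ext ((g i).injective (congrArg Units.val hab))
  have hKcard : ∀ i, 2 ≤ Fintype.card (K i) := fun i => Fintype.one_lt_card
  have hcpos : 0 < q ^ 2 - 1 := by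
    have h4 : 4 ≤ q ^ 2 := by nlinarith
    omega
  have hcdvd : ∀ i, (q ^ 2 - 1) ∣ (Fintype.card (K i) - 1) := by
    intro i
    have h1 := Subgroup.card_subgroup_dvd_card (GH i).range
    have h2 : Nat.card (GH i).range = q ^ 2 - 1 := by
      rw [Nat.card_congr (MonoidHom.ofInjective (hGHinj i)).toEquiv.symm,
        Nat.card_eq_fintype_card, hcE]
    have h3 : Nat.card ((K i)ˣ) = Fintype.card (K i) - 1 := by
      rw [Nat.card_eq_fintype_card, Fintype.card_units]
    rw [h2, h3] at h1
    exact h1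
  have hnpos : ∀ i, 0 < Fintype.card (K i) - 1 := fun i => by have := hKcard i; omega
  set m : Fin s → ℕ := fun i => (Fintype.card (K i) - 1) / (q ^ 2 - 1) with hmdef
  have hmpos : ∀ i, 0 < m i :=
    fun i => Nat.div_pos (Nat.le_of_dvd (hnpos i) (hcdvd i)) hcpos
  have hNcard : ∀ i, Nat.card ((K i)ˣ) = m i * (q ^ 2 - 1) := by
    intro i
    rw [Nat.card_eq_fintype_card, Fintype.card_units, hmdef]
    exact (Nat.div_mul_cancel (hcdvd i)).symm
  refine ⟨part1, ?_, ?_⟩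
  · -- q even
    intro hev
    have hsqall : ∀ u : Eˣ, ∃ w : Eˣ, w ^ 2 = u := by
      intro u
      apply sq_of_odd_card
      rw [hcE]
      obtain ⟨r, hr⟩ := hev
      have hqq : q ^ 2 = 2 * (2 * r * r) := by rw [hr]; ring
      have hq4 : 4 ≤ q ^ 2 := by nlinarith
      omega
    choose f hfsurj hfker using fun i =>
      exists_hom_zmod ((K i)ˣ) (m i) (q ^ 2 - 1) (hmpos i) hcpos (hNcard i)
    let Φ₀ : (∀ i, (K i)ˣ) →* (∀ i, Multiplicative (ZMod (m i))) :=
      MonoidHom.mk' (fun a i => f i (a i)) (fun a b => funext fun i => map_mul (f i) (a i) (b i))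
    let Φ : (∀ i, (K i)ˣ) →* Multiplicative (∀ i, ZMod (m i)) :=
      (MulEquiv.piMultiplicative (fun i => ZMod (m i))).symm.toMonoidHom.comp Φ₀
    have hΦ₀surj : Function.Surjective Φ₀ := by
      intro y
      choose b hb using fun i => hfsurj i (y i)
      exact ⟨b, funext hb⟩
    have hΦsurj : Function.Surjective Φ :=
      (MulEquiv.piMultiplicative (fun i => ZMod (m i))).symm.surjective.comp hΦ₀surj
    have hker : Q = Φ.ker := by
      ext a
      rw [MonoidHom.mem_ker]
      have hΦ1 : Φ a = 1 ↔ ∀ i, f i (a i) = 1 := by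
        rw [show Φ a = (MulEquiv.piMultiplicative (fun i => ZMod (m i))).symm (Φ₀ a) from rfl,
          MulEquiv.map_eq_one_iff]
        constructor
        · intro h i
          exact congrFun h i
        · intro h
          funext i
          exact h i
      rw [hΦ1]
      constructor
      · intro haQ
        have hmem : a ∈ (Q : Set (∀ i, (K i)ˣ)) := haQ
        rw [part1] at hmem
        obtain ⟨α, β, hab⟩ := hmem
        intro i
        rw [hfker i, hab i, ← map_pow, hpowEu, map_one]
      · intro h
        have hmem : a ∈ {a : ∀ i, (K i)ˣ | ∃ α : Eˣ, ∃ β : Fin s → Eˣ, ∀ i,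
            a i = Units.map (g i).toMonoidHom (α * (β i) ^ 2)} := by
          have hexu : ∀ i, ∃ u : Eˣ, GH i u = a i :=
            fun i => (hunit i (a i)).2 ((hfker i (a i)).1 (h i))
          choose u hu using hexu
          choose β hβ using fun i => hsqall (u i)
          exact ⟨1, β, fun i => by rw [one_mul, hβ i]; exact (hu i).symm⟩
        rw [← part1] at hmem
        exact hmem
    exact ⟨(QuotientGroup.quotientMulEquivOfEq hker).trans
      (QuotientGroup.quotientKerEquivOfSurjective Φ hΦsurj)⟩
  · -- q odd
    intro hod
    have hceven : 2 ∣ q ^ 2 - 1 := by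
      obtain ⟨r, hr⟩ := hod
      have hqq : q ^ 2 = 2 * (2 * r * r + 2 * r) + 1 := by rw [hr]; ring
      omega
    have h2m : ∀ i, Nat.card ((K i)ˣ) = (2 * m i) * ((q ^ 2 - 1) / 2) := by
      intro i
      rw [hNcard i]
      have h1 : q ^ 2 - 1 = 2 * ((q ^ 2 - 1) / 2) := by omega
      calc m i * (q ^ 2 - 1) = m i * (2 * ((q ^ 2 - 1) / 2)) := by rw [← h1]
        _ = (2 * m i) * ((q ^ 2 - 1) / 2) := by ring
    have hhalfpos : 0 < (q ^ 2 - 1) / 2 := by omega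
    have h2mpos : ∀ i, 0 < 2 * m i := fun i => by have := hmpos i; omega
    choose f hfsurj hfker using fun i =>
      exists_hom_zmod ((K i)ˣ) (2 * m i) ((q ^ 2 - 1) / 2) (h2mpos i) hhalfpos (h2m i)
    have hsqiff : ∀ u : Eˣ, u ^ ((q ^ 2 - 1) / 2) = 1 ↔ ∃ w : Eˣ, w ^ 2 = u := by
      intro u
      constructor
      · intro h
        exact sq_of_pow_eq_one (k := (q ^ 2 - 1) / 2) (e := 2) ⟨1, rfl⟩ (by rw [hcE]; omega) h
      · rintro ⟨w, rfl⟩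
        rw [← pow_mul, show 2 * ((q ^ 2 - 1) / 2) = q ^ 2 - 1 from by omega]
        exact hpowEu w
    obtain ⟨γ, hγgen⟩ := IsCyclic.exists_generator (α := Eˣ)
    have hγns : ¬ ∃ w : Eˣ, w ^ 2 = γ := by
      intro hsq
      have h1 : γ ^ ((q ^ 2 - 1) / 2) = 1 := (hsqiff γ).2 hsq
      have h2 : orderOf γ = q ^ 2 - 1 := by
        rw [orderOf_eq_card_of_forall_mem_zpowers hγgen, Nat.card_eq_fintype_card, hcE]
      have h3 := orderOf_dvd_of_pow_eq_one h1
      rw [h2] at h3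
      have h4 := Nat.le_of_dvd hhalfpos h3
      omega
    let Φ₀ : (∀ i, (K i)ˣ) →* (∀ i, Multiplicative (ZMod (2 * m i))) :=
      MonoidHom.mk' (fun a i => f i (a i)) (fun a b => funext fun i => map_mul (f i) (a i) (b i))
    let Φ : (∀ i, (K i)ˣ) →* Multiplicative (∀ i, ZMod (2 * m i)) :=
      (MulEquiv.piMultiplicative (fun i => ZMod (2 * m i))).symm.toMonoidHom.comp Φ₀
    have hΦ₀surj : Function.Surjective Φ₀ := by
      intro y
      choose b hb using fun i => hfsurj i (y i)
      exact ⟨b, funext hb⟩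
    have hΦsurj : Function.Surjective Φ :=
      (MulEquiv.piMultiplicative (fun i => ZMod (2 * m i))).symm.surjective.comp hΦ₀surj
    set v : ∀ i, ZMod (2 * m i) := fun i => ((m i : ℕ) : ZMod (2 * m i)) with hvdef
    set Sv : AddSubgroup (∀ i, ZMod (2 * m i)) := AddSubgroup.closure {v} with hSvdef
    let T : Multiplicative (∀ i, ZMod (2 * m i)) →*
        Multiplicative ((∀ i, ZMod (2 * m i)) ⧸ Sv) :=
      AddMonoidHom.toMultiplicative (QuotientAddGroup.mk' Sv)
    let Φ' := T.comp Φ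
    have hTsurj : Function.Surjective T := by
      intro y
      obtain ⟨x, hx⟩ := QuotientAddGroup.mk'_surjective Sv (Multiplicative.toAdd y)
      exact ⟨Multiplicative.ofAdd x, congrArg Multiplicative.ofAdd hx⟩
    have hΦ'surj : Function.Surjective Φ' := hTsurj.comp hΦsurj
    have hΦtoAdd : ∀ (a : ∀ i, (K i)ˣ) (i : Fin s),
        Multiplicative.toAdd (Φ a) i = Multiplicative.toAdd (f i (a i)) := fun a i => rfl
    have hT1 : ∀ x, T x = 1 ↔ Multiplicative.toAdd x ∈ Sv := by
      intro x
      constructor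
      · intro h
        have h2 := congrArg Multiplicative.toAdd h
        exact (QuotientAddGroup.eq_zero_iff _).1 h2
      · intro h
        have h2 : ((Multiplicative.toAdd x : ∀ i, ZMod (2 * m i)) :
            (∀ i, ZMod (2 * m i)) ⧸ Sv) = 0 := (QuotientAddGroup.eq_zero_iff _).2 h
        exact congrArg Multiplicative.ofAdd h2
    have hfGH1 : ∀ i (u : Eˣ), (∃ w : Eˣ, w ^ 2 = u) → f i (GH i u) = 1 := by
      intro i u hu
      rw [hfker i, ← map_pow, (hsqiff u).2 hu, map_one]
    have hfGHm : ∀ i (u : Eˣ), ¬ (∃ w : Eˣ, w ^ 2 = u) →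
        Multiplicative.toAdd (f i (GH i u)) = ((m i : ℕ) : ZMod (2 * m i)) := by
      intro i u hu
      haveI : NeZero (2 * m i) := ⟨(h2mpos i).ne'⟩
      set z := Multiplicative.toAdd (f i (GH i u)) with hzdef
      have h2z : f i (GH i u) * f i (GH i u) = 1 := by
        rw [← map_mul, ← map_mul]
        exact hfGH1 i (u * u) ⟨u, sq u⟩
      have hzz : z + z = 0 := congrArg Multiplicative.toAdd h2z
      have hz0 : z ≠ 0 := by
        intro h0
        have h1 : f i (GH i u) = 1 := by
          have h2 := congrArg Multiplicative.ofAdd h0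
          exact h2
        have h2 : (GH i u) ^ ((q ^ 2 - 1) / 2) = 1 := (hfker i _).1 h1
        have h3 : u ^ ((q ^ 2 - 1) / 2) = 1 := by
          apply hGHinj i
          rw [map_pow, map_one]
          exact h2
        exact hu ((hsqiff u).1 h3)
      have hv2 : ((2 * z.val : ℕ) : ZMod (2 * m i)) = 0 := by
        have hzc : ((z.val : ℕ) : ZMod (2 * m i)) = z := ZMod.natCast_rightInverse z
        rw [Nat.cast_mul, Nat.cast_ofNat, hzc]
        exact (two_mul z).trans hzz
      have hdvd2 : 2 * m i ∣ 2 * z.val := (ZMod.natCast_eq_zero_iff _ _).1 hv2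
      have hmdvd : m i ∣ z.val := by
        obtain ⟨t, ht⟩ := hdvd2
        have ht' : 2 * z.val = 2 * (m i * t) := by rw [ht]; ring
        exact ⟨t, by omega⟩
      have hlt : z.val < 2 * m i := ZMod.val_lt z
      have hvne : z.val ≠ 0 := fun h0 => hz0 ((ZMod.val_eq_zero z).1 h0)
      have hval : z.val = m i := by
        obtain ⟨t, ht⟩ := hmdvd
        have hmpos' := hmpos i
        rcases t with _ | _ | t
        · omega
        · omega
        · exfalso
          have hge : m i * (t + 1 + 1) ≥ m i * 2 := Nat.mul_le_mul_left _ (by omega)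
          have h2m' : m i * 2 = 2 * m i := by ring
          omega
      calc z = ((z.val : ℕ) : ZMod (2 * m i)) := (ZMod.natCast_rightInverse z).symm
        _ = ((m i : ℕ) : ZMod (2 * m i)) := by rw [hval]
    have hQmem_toAdd : ∀ a, a ∈ Q → Multiplicative.toAdd (Φ a) ∈ Sv := by
      intro a haQ
      have ha : a ∈ (Q : Set (∀ i, (K i)ˣ)) := haQ
      rw [part1] at ha
      obtain ⟨α, β, hab⟩ := ha
      have hfa : ∀ i, f i (a i) = f i (GH i α) := by
        intro i
        rw [hab i]
        show f i (GH i (α * (β i) ^ 2)) = f i (GH i α)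
        rw [map_mul, map_mul, hfGH1 i ((β i) ^ 2) ⟨β i, rfl⟩, mul_one]
      by_cases hα : ∃ w : Eˣ, w ^ 2 = α
      · have h0 : Multiplicative.toAdd (Φ a) = 0 := by
          funext i
          show Multiplicative.toAdd (f i (a i)) = 0
          rw [hfa i, hfGH1 i α hα]
          rfl
        rw [h0]
        exact zero_mem Sv
      · have h0 : Multiplicative.toAdd (Φ a) = v := by
          funext i
          show Multiplicative.toAdd (f i (a i)) = v i
          rw [hfa i, hfGHm i α hα]
        rw [h0]
        exact AddSubgroup.subset_closure rfl
    have hker0 : ∀ b : ∀ i, (K i)ˣ, Φ b = 1 → b ∈ Q := by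
      intro b hb
      have hf1 : ∀ i, f i (b i) = 1 := by
        intro i
        have h0 : Multiplicative.toAdd (Φ b) i = 0 := by rw [hb]; rfl
        have h1 : Multiplicative.toAdd (f i (b i)) = 0 := h0
        have h2 := congrArg Multiplicative.ofAdd h1
        simpa using h2
      have hb2 : ∀ i, ∃ wE : Eˣ, GH i (wE ^ 2) = b i := by
        intro i
        have h2 : (b i) ^ ((q ^ 2 - 1) / 2) = 1 := (hfker i _).1 (hf1 i)
        have h3 : (b i) ^ (q ^ 2 - 1) = 1 := by
          rw [show q ^ 2 - 1 = (q ^ 2 - 1) / 2 * 2 from by omega, pow_mul, h2, one_pow]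
        obtain ⟨u, hu⟩ := (hunit i _).2 h3
        have hu2 : u ^ ((q ^ 2 - 1) / 2) = 1 := by
          apply hGHinj i
          rw [map_pow, map_one, hu]
          exact h2
        obtain ⟨w0, hw0⟩ := (hsqiff u).1 hu2
        exact ⟨w0, by rw [hw0, hu]⟩
      choose β hβ using hb2
      have hmem : b ∈ (Q : Set (∀ i, (K i)ˣ)) := by
        rw [part1]
        exact ⟨1, β, fun i => by rw [one_mul]; exact (hβ i).symm⟩
      exact hmem
    have hSv2 : ∀ x ∈ Sv, x = 0 ∨ x = v := by
      intro x hx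
      obtain ⟨nn, hn⟩ := AddSubgroup.mem_closure_singleton.1 hx
      have h2v : v + v = 0 := by
        funext i
        show v i + v i = 0
        have h1 : v i = ((m i : ℕ) : ZMod (2 * m i)) := rfl
        rw [h1, ← Nat.cast_add, show m i + m i = 2 * m i from by omega]
        exact ZMod.natCast_self _
      rcases Int.even_or_odd nn with ⟨k, hk⟩ | ⟨k, hk⟩
      · left
        rw [← hn, hk, add_zsmul, ← smul_add, h2v, smul_zero]
      · right
        rw [← hn, hk, add_zsmul, one_zsmul, mul_comm, mul_zsmul, two_zsmul, h2v,
          smul_zero, zero_add]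
    have hkerEq : Q = Φ'.ker := by
      ext a
      rw [MonoidHom.mem_ker]
      have hTa : Φ' a = T (Φ a) := rfl
      rw [hTa, hT1]
      constructor
      · exact hQmem_toAdd a
      · intro h1
        rcases hSv2 _ h1 with h0 | hveq
        · apply hker0
          have h2 := congrArg Multiplicative.ofAdd h0
          simpa using h2
        · have hdQ : (fun j => GH j γ) ∈ Q := hdiag γ
          have hΦd : Multiplicative.toAdd (Φ (fun j => GH j γ)) = v := by
            funext i
            show Multiplicative.toAdd (f i (GH i γ)) = v i
            exact hfGHm i γ hγns
          have hΦeq : Φ a = Φ (fun j => GH j γ) := by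
            have h2 : Multiplicative.toAdd (Φ a)
                = Multiplicative.toAdd (Φ (fun j => GH j γ)) := by rw [hveq, hΦd]
            have h3 := congrArg Multiplicative.ofAdd h2
            simpa using h3
          have hmm : a * (fun j => GH j γ)⁻¹ ∈ Q := by
            apply hker0
            rw [map_mul, map_inv, hΦeq, mul_inv_cancel]
          have h4 := mul_mem hmm hdQ
          simpa using h4
    exact ⟨(QuotientGroup.quotientMulEquivOfEq hkerEq).trans
      (QuotientGroup.quotientKerEquivOfSurjective Φ' hΦ'surj)⟩
end

section
/- Let q be a prime power and consider the free abelian group on generators ψ_1, …, ψ_q modulo the relations (q+2)ψ_q − ψ_{q−1} = 0, −ψ_{i+1} + 2ψ_i − ψ_{i−1} = 0 for 2 ≤ i ≤ q−1, and −ψ_2 + (q+2)ψ_1 = 0. This quotient group is cyclic of order (q^2+1)(q+1), generated by the image of ψ_1. -/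
private def HypM (q : ℕ) (M : Matrix (Fin q) (Fin q) ℤ) : Prop :=
  ∀ i j : Fin q, M i j =
    if i = j then (if i.val = 0 ∨ i.val = q - 1 then (q : ℤ) + 2 else 2)
    else if i.val + 1 = j.val ∨ j.val + 1 = i.val then -1 else 0

private lemma rowsum5 {q : ℕ} {M : Matrix (Fin q) (Fin q) ℤ} (hq : 2 ≤ q)
    (hM : HypM q M) (c : ℕ → ℤ) (i : Fin q) :
    ∑ j : Fin q, M i j * c j.val =
      if i.val = 0 then ((q:ℤ)+2) * c 0 - c 1
      else if i.val = q - 1 then ((q:ℤ)+2) * c (q-1) - c (q-2)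
      else 2 * c i.val - c (i.val - 1) - c (i.val + 1) := by
  have hsplit : ∀ j : Fin q, M i j * c j.val =
      (if j = i then (if i.val = 0 ∨ i.val = q-1 then ((q:ℤ)+2) else 2) * c i.val else 0)
      + (if (j:ℕ) + 1 = i.val then -c j.val else 0)
      + (if (j:ℕ) = i.val + 1 then -c j.val else 0) := by
    intro j
    rw [hM]
    by_cases h1 : i = j
    · subst h1; simp
    · have h1' : i.val ≠ j.val := fun he => h1 (Fin.ext he)
      by_cases h2 : (j:ℕ) + 1 = i.val
      · rw [if_neg h1, if_pos (Or.inr h2), if_neg (by simp only [Fin.ext_iff]; omega),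
          if_pos h2, if_neg (by omega)]
        ring
      · by_cases h3 : (j:ℕ) = i.val + 1
        · rw [if_neg h1, if_pos (Or.inl h3.symm), if_neg (by simp only [Fin.ext_iff]; omega),
            if_neg h2, if_pos h3]
          ring
        · rw [if_neg h1, if_neg (by omega), if_neg (by simp only [Fin.ext_iff]; omega),
            if_neg h2, if_neg h3]
          ring
  rw [Finset.sum_congr rfl (fun j _ => hsplit j), Finset.sum_add_distrib,
    Finset.sum_add_distrib, Finset.sum_ite_eq' Finset.univ i]
  simp only [Finset.mem_univ, if_true]
  by_cases h0 : i.val = 0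
  · have hz : ∀ j : Fin q, (if (j:ℕ) + 1 = i.val then -c j.val else 0) = 0 := by
      intro j; rw [if_neg (by omega)]
    have ho : ∀ j : Fin q, (if (j:ℕ) = i.val + 1 then -c j.val else 0) =
        (if j = (⟨1, by omega⟩ : Fin q) then -c 1 else 0) := by
      intro j
      by_cases hj : (j:ℕ) = i.val + 1
      · rw [if_pos hj, if_pos (by simp only [Fin.ext_iff]; omega),
          show (j:ℕ) = 1 by omega]
      · rw [if_neg hj, if_neg (by simp only [Fin.ext_iff]; omega)]
    rw [Finset.sum_congr rfl (fun j _ => hz j), Finset.sum_congr rfl (fun j _ => ho j),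
      Finset.sum_ite_eq' Finset.univ]
    simp only [Finset.mem_univ, if_true, Finset.sum_const_zero]
    rw [if_pos h0, if_pos (Or.inl h0), h0]
    ring
  · have hm : ∀ j : Fin q, (if (j:ℕ) + 1 = i.val then -c j.val else 0) =
        (if j = (⟨i.val - 1, by omega⟩ : Fin q) then -c (i.val - 1) else 0) := by
      intro j
      by_cases hj : (j:ℕ) + 1 = i.val
      · rw [if_pos hj, if_pos (by simp only [Fin.ext_iff]; omega),
          show (j:ℕ) = i.val - 1 by omega]
      · rw [if_neg hj, if_neg (by simp only [Fin.ext_iff]; omega)]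
    rw [Finset.sum_congr rfl (fun j _ => hm j), Finset.sum_ite_eq' Finset.univ]
    simp only [Finset.mem_univ, if_true]
    by_cases hl : i.val = q - 1
    · have hz : ∀ j : Fin q, (if (j:ℕ) = i.val + 1 then -c j.val else 0) = 0 := by
        intro j; rw [if_neg (by omega)]
      rw [Finset.sum_congr rfl (fun j _ => hz j)]
      simp only [Finset.sum_const_zero]
      rw [if_neg h0, if_pos hl, if_pos (Or.inr hl), hl, show q - 1 - 1 = q - 2 by omega]
      ring
    · have ho : ∀ j : Fin q, (if (j:ℕ) = i.val + 1 then -c j.val else 0) =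
          (if j = (⟨i.val + 1, by omega⟩ : Fin q) then -c (i.val + 1) else 0) := by
        intro j
        by_cases hj : (j:ℕ) = i.val + 1
        · rw [if_pos hj, if_pos (by simp only [Fin.ext_iff]; omega),
            show (j:ℕ) = i.val + 1 from hj]
        · rw [if_neg hj, if_neg (by simp only [Fin.ext_iff]; omega)]
      rw [Finset.sum_congr rfl (fun j _ => ho j), Finset.sum_ite_eq' Finset.univ]
      simp only [Finset.mem_univ, if_true]
      rw [if_neg h0, if_neg hl, if_neg (by omega)]
      ring

private lemma rowsum_a {q : ℕ} {M : Matrix (Fin q) (Fin q) ℤ} (hq : 2 ≤ q)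
    (hM : HypM q M) (i : Fin q) :
    ∑ j : Fin q, M i j * (1 + (j:ℤ) * (q+1)) =
      if i.val = q - 1 then ((q:ℤ)^2+1) * ((q:ℤ)+1) else 0 := by
  have := rowsum5 hq hM (fun n => 1 + (n:ℤ) * (q+1)) i
  rw [this]
  by_cases h0 : i.val = 0
  · rw [if_pos h0, if_neg (by omega)]
    push_cast
    ring
  · by_cases hl : i.val = q - 1
    · rw [if_neg h0, if_pos hl, if_pos hl]
      have e1 : ((q - 1 : ℕ) : ℤ) = (q:ℤ) - 1 := by
        have h1 : (1:ℕ) ≤ q := by omega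
        push_cast [h1]; ring
      have e2 : ((q - 2 : ℕ) : ℤ) = (q:ℤ) - 2 := by
        push_cast [hq]; ring
      rw [e1, e2]
      ring
    · rw [if_neg h0, if_neg hl, if_neg hl]
      have e1 : ((i.val - 1 : ℕ) : ℤ) = (i.val : ℤ) - 1 := by
        have h1 : (1:ℕ) ≤ i.val := by omega
        push_cast [h1]; ring
      rw [e1]
      push_cast
      ring

private lemma rowsum_b {q : ℕ} {M : Matrix (Fin q) (Fin q) ℤ} (hq : 2 ≤ q)
    (hM : HypM q M) (i : Fin q) :
    ∑ j : Fin q, M i j * ((q:ℤ)^2 - (j:ℤ) * (q+1)) =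
      if i.val = 0 then ((q:ℤ)^2+1) * ((q:ℤ)+1) else 0 := by
  have := rowsum5 hq hM (fun n => (q:ℤ)^2 - (n:ℤ) * (q+1)) i
  rw [this]
  by_cases h0 : i.val = 0
  · rw [if_pos h0, if_pos h0]
    push_cast
    ring
  · by_cases hl : i.val = q - 1
    · rw [if_neg h0, if_pos hl, if_neg h0]
      have e1 : ((q - 1 : ℕ) : ℤ) = (q:ℤ) - 1 := by
        have h1 : (1:ℕ) ≤ q := by omega
        push_cast [h1]; ring
      have e2 : ((q - 2 : ℕ) : ℤ) = (q:ℤ) - 2 := by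
        push_cast [hq]; ring
      rw [e1, e2]
      ring
    · rw [if_neg h0, if_neg hl, if_neg h0]
      have e1 : ((i.val - 1 : ℕ) : ℤ) = (i.val : ℤ) - 1 := by
        have h1 : (1:ℕ) ≤ i.val := by omega
        push_cast [h1]; ring
      rw [e1]
      push_cast
      ring

private lemma Msymm5 {q : ℕ} {M : Matrix (Fin q) (Fin q) ℤ} (hM : HypM q M)
    (i j : Fin q) : M i j = M j i := by
  rw [hM i j, hM j i]
  by_cases h : i = j
  · subst h; rfl
  · rw [if_neg h, if_neg (Ne.symm h)]
    by_cases h2 : i.val + 1 = j.val ∨ j.val + 1 = i.val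
    · rw [if_pos h2, if_pos (Or.symm h2)]
    · rw [if_neg h2, if_neg (fun hh => h2 (Or.symm hh))]

private lemma mulVec_bvec {q : ℕ} {M : Matrix (Fin q) (Fin q) ℤ} (hq : 2 ≤ q)
    (hM : HypM q M) :
    M.mulVecLin (fun j : Fin q => (q:ℤ)^2 - (j:ℤ) * (q+1)) =
      (((q:ℤ)^2+1) * ((q:ℤ)+1)) • Pi.single (⟨0, Nat.zero_lt_of_lt hq⟩ : Fin q) (1:ℤ) := by
  funext i
  rw [Matrix.mulVecLin_apply]
  show ∑ j : Fin q, M i j * ((q:ℤ)^2 - (j:ℤ) * (q+1)) = _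
  rw [rowsum_b hq hM i]
  simp only [Pi.smul_apply, Pi.single_apply, smul_eq_mul]
  by_cases h0 : i.val = 0
  · rw [if_pos h0, if_pos (by simp [Fin.ext_iff, h0]), mul_one]
  · rw [if_neg h0, if_neg (by simp [Fin.ext_iff]; omega), mul_zero]

private lemma pair_range {q : ℕ} {M : Matrix (Fin q) (Fin q) ℤ} (hq : 2 ≤ q)
    (hM : HypM q M) (v : Fin q → ℤ) :
    ∑ i : Fin q, (M.mulVecLin v) i * (1 + (i:ℤ) * (q+1)) =
      v ⟨q-1, by omega⟩ * (((q:ℤ)^2+1) * ((q:ℤ)+1)) := by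
  have step1 : ∀ i : Fin q, (M.mulVecLin v) i * (1 + (i:ℤ) * (q+1)) =
      ∑ j : Fin q, v j * (M j i * (1 + (i:ℤ) * (q+1))) := by
    intro i
    rw [Matrix.mulVecLin_apply]
    show (∑ j : Fin q, M i j * v j) * _ = _
    rw [Finset.sum_mul]
    refine Finset.sum_congr rfl fun j _ => ?_
    rw [Msymm5 hM i j]; ring
  rw [Finset.sum_congr rfl fun i _ => step1 i, Finset.sum_comm]
  have step2 : ∀ j : Fin q, ∑ i : Fin q, v j * (M j i * (1 + (i:ℤ) * (q+1))) =
      (if j = (⟨q-1, by omega⟩ : Fin q) then v j * (((q:ℤ)^2+1) * ((q:ℤ)+1)) else 0) := by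
    intro j
    rw [← Finset.mul_sum, rowsum_a hq hM j]
    by_cases h : j.val = q - 1
    · rw [if_pos h, if_pos (by simp [Fin.ext_iff, h])]
    · rw [if_neg h, if_neg (by simp [Fin.ext_iff]; omega), mul_zero]
  rw [Finset.sum_congr rfl fun j _ => step2 j, Finset.sum_ite_eq' Finset.univ]
  simp

private lemma col_zero {q : ℕ} {M : Matrix (Fin q) (Fin q) ℤ} (hq : 2 ≤ q)
    (hM : HypM q M) :
    (fun i : Fin q => M i ⟨0, Nat.zero_lt_of_lt hq⟩) =
      ((q:ℤ)+2) • Pi.single (⟨0, Nat.zero_lt_of_lt hq⟩ : Fin q) (1:ℤ)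
        - Pi.single (⟨1, by omega⟩ : Fin q) (1:ℤ) := by
  funext i
  rw [hM]
  simp only [Pi.sub_apply, Pi.smul_apply, Pi.single_apply, smul_eq_mul, Fin.ext_iff,
    Fin.val_mk]
  split_ifs <;> try casesm* _ ∨ _
  all_goals first | omega | (push_cast; ring1) | simp_all

private lemma col_mid {q : ℕ} {M : Matrix (Fin q) (Fin q) ℤ} (hq : 2 ≤ q)
    (hM : HypM q M) (n : ℕ) (hn : n + 2 < q) :
    (fun i : Fin q => M i ⟨n+1, by omega⟩) =
      (2:ℤ) • Pi.single (⟨n+1, by omega⟩ : Fin q) (1:ℤ)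
        - Pi.single (⟨n, by omega⟩ : Fin q) (1:ℤ)
        - Pi.single (⟨n+2, by omega⟩ : Fin q) (1:ℤ) := by
  funext i
  rw [hM]
  simp only [Pi.sub_apply, Pi.smul_apply, Pi.single_apply, smul_eq_mul, Fin.ext_iff,
    Fin.val_mk]
  split_ifs <;> try casesm* _ ∨ _
  all_goals first | omega | (push_cast; ring1) | simp_all

/-- The free abelian group on `ψ₁,…,ψ_q` modulo the relations given by the rows of
the intersection matrix `M` (with `M₁₁ = M_qq = q+2`, `Mᵢᵢ = 2` otherwise,
`M_{i,i+1} = M_{i+1,i} = -1`) is cyclic of order `(q²+1)(q+1)`, generated by the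
image of `ψ₁`. -/
theorem stmt_5 (q : ℕ) (hq : 2 ≤ q)
    (M : Matrix (Fin q) (Fin q) ℤ)
    (hM : ∀ i j : Fin q, M i j =
      if i = j then (if i.val = 0 ∨ i.val = q - 1 then (q : ℤ) + 2 else 2)
      else if i.val + 1 = j.val ∨ j.val + 1 = i.val then -1 else 0) :
    addOrderOf (Submodule.Quotient.mk (Pi.single (⟨0, by omega⟩ : Fin q) (1 : ℤ)) :
        (Fin q → ℤ) ⧸ LinearMap.range M.mulVecLin) = (q ^ 2 + 1) * (q + 1) ∧
    ∀ x : (Fin q → ℤ) ⧸ LinearMap.range M.mulVecLin,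
      x ∈ AddSubgroup.zmultiples
        (Submodule.Quotient.mk (Pi.single (⟨0, by omega⟩ : Fin q) (1 : ℤ))) := by
  have hM' : HypM q M := hM
  set R : Submodule ℤ (Fin q → ℤ) := LinearMap.range M.mulVecLin with hR
  set e0 : Fin q → ℤ := Pi.single (⟨0, by omega⟩ : Fin q) (1 : ℤ) with he0
  set g0 : (Fin q → ℤ) ⧸ R := Submodule.Quotient.mk e0 with hg0
  have hNcast : (((q^2+1)*(q+1) : ℕ) : ℤ) = ((q:ℤ)^2+1) * ((q:ℤ)+1) := by push_cast; ring
  -- N • g0 = 0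
  have hNzero : (((q:ℤ)^2+1) * ((q:ℤ)+1)) • g0 = 0 := by
    rw [hg0, ← Submodule.Quotient.mk_smul, Submodule.Quotient.mk_eq_zero]
    exact ⟨fun j : Fin q => (q:ℤ)^2 - (j:ℤ) * (q+1), mulVec_bvec hq hM'⟩
  -- order divides N
  have hdvd1 : addOrderOf g0 ∣ (q^2+1)*(q+1) := by
    apply addOrderOf_dvd_of_nsmul_eq_zero
    rw [← natCast_zsmul, hNcast]
    exact hNzero
  -- N divides order
  have hdvd2 : (q^2+1)*(q+1) ∣ addOrderOf g0 := by
    set k := addOrderOf g0 with hk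
    have hknsmul : k • g0 = 0 := addOrderOf_nsmul_eq_zero g0
    have hkz : ((k:ℤ)) • g0 = 0 := by rw [natCast_zsmul]; exact hknsmul
    rw [hg0, ← Submodule.Quotient.mk_smul, Submodule.Quotient.mk_eq_zero] at hkz
    obtain ⟨v, hv⟩ := hkz
    have hpair := pair_range hq hM' v
    rw [hv] at hpair
    have hleft : ∑ i : Fin q, ((k:ℤ) • e0) i * (1 + (i:ℤ) * (q+1)) = (k:ℤ) := by
      have : ∀ i : Fin q, ((k:ℤ) • e0) i * (1 + (i:ℤ) * (q+1)) =
          (if i = (⟨0, by omega⟩ : Fin q) then (k:ℤ) else 0) := by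
        intro i
        rw [he0]
        simp only [Pi.smul_apply, Pi.single_apply, smul_eq_mul]
        by_cases h : i = (⟨0, by omega⟩ : Fin q)
        · rw [if_pos h, if_pos h, h]
          simp
        · rw [if_neg h, if_neg h]
          ring
      rw [Finset.sum_congr rfl fun i _ => this i, Finset.sum_ite_eq' Finset.univ]
      simp
    rw [hleft] at hpair
    have : ((((q^2+1)*(q+1) : ℕ)) : ℤ) ∣ (k : ℤ) := by
      rw [hNcast, hpair]
      exact dvd_mul_left _ _
    exact_mod_cast this
  constructor
  · exact Nat.dvd_antisymm hdvd1 hdvd2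
  · -- generation
    set G : ℕ → ((Fin q → ℤ) ⧸ R) := fun n =>
      if h : n < q then Submodule.Quotient.mk (Pi.single (⟨n, h⟩ : Fin q) (1:ℤ)) else 0
      with hG
    have hcol : ∀ j : Fin q,
        (Submodule.Quotient.mk (fun i : Fin q => M i j) : (Fin q → ℤ) ⧸ R) = 0 := by
      intro j
      rw [Submodule.Quotient.mk_eq_zero]
      exact ⟨Pi.single j 1, by simp [Matrix.mulVecLin_apply]; rfl⟩
    have hG0 : G 0 = g0 := by
      rw [hG]; simp only [dif_pos (show 0 < q by omega)]; rfl
    have hG1 : G 1 = ((q:ℤ)+2) • G 0 := by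
      have h1 := hcol ⟨0, by omega⟩
      rw [col_zero hq hM', Submodule.Quotient.mk_sub, Submodule.Quotient.mk_smul,
        sub_eq_zero] at h1
      rw [hG]
      simp only [dif_pos (show 1 < q by omega), dif_pos (show 0 < q by omega)]
      exact h1.symm
    have hGstep : ∀ n, n + 2 < q → G (n+2) = (2:ℤ) • G (n+1) - G n := by
      intro n hn
      have h1 := hcol ⟨n+1, by omega⟩
      rw [col_mid hq hM' n hn, Submodule.Quotient.mk_sub, Submodule.Quotient.mk_sub,
        Submodule.Quotient.mk_smul, sub_sub, sub_eq_zero] at h1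
      rw [hG]
      simp only [dif_pos (show n+2 < q from hn), dif_pos (show n+1 < q by omega),
        dif_pos (show n < q by omega)]
      have := h1.symm
      rw [eq_comm, ← sub_eq_iff_eq_add'] at this
      rw [← this]
    have hGa : ∀ n, n < q → G n = (1 + (n:ℤ)*((q:ℤ)+1)) • G 0 := by
      intro n
      induction n using Nat.strong_induction_on with
      | _ n ih =>
        match n with
        | 0 => intro _; simp
        | 1 =>
          intro _
          rw [hG1]
          congr 1
          push_cast; ring
        | (m+2) =>
          intro hn
          rw [hGstep m hn, ih (m+1) (by omega) (by omega), ih m (by omega) (by omega),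
            smul_smul, ← sub_smul]
          congr 1
          push_cast; ring
    intro x
    obtain ⟨y, rfl⟩ := Submodule.Quotient.mk_surjective R x
    rw [AddSubgroup.mem_zmultiples_iff]
    refine ⟨∑ i : Fin q, y i * (1 + (i:ℤ)*((q:ℤ)+1)), ?_⟩
    have expand : (Submodule.Quotient.mk y : (Fin q → ℤ) ⧸ R) =
        ∑ i : Fin q, y i • (Submodule.Quotient.mk (Pi.single i (1:ℤ)) : (Fin q → ℤ) ⧸ R) := by
      conv_lhs => rw [← Finset.univ_sum_single y]
      rw [show (Submodule.Quotient.mk : (Fin q → ℤ) → (Fin q → ℤ) ⧸ R) = R.mkQ from rfl,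
        map_sum]
      refine Finset.sum_congr rfl fun i _ => ?_
      have hsingle : (Pi.single i (y i) : Fin q → ℤ) = y i • Pi.single i (1:ℤ) := by
        funext j
        by_cases h : j = i
        · subst h; simp
        · simp [Pi.single_eq_of_ne h]
      exact (congrArg R.mkQ hsingle).trans (map_smul R.mkQ (y i) _)
    rw [expand]
    have single_eq : ∀ i : Fin q,
        (Submodule.Quotient.mk (Pi.single i (1:ℤ)) : (Fin q → ℤ) ⧸ R) =
          (1 + (i:ℤ)*((q:ℤ)+1)) • g0 := by
      intro i
      have : (Submodule.Quotient.mk (Pi.single i (1:ℤ)) : (Fin q → ℤ) ⧸ R) = G i.val := by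
        rw [hG]
        simp only [dif_pos i.isLt]
      rw [this, hGa i.val i.isLt, hG0]
    have hsum : ∑ i : Fin q, y i •
        (Submodule.Quotient.mk (Pi.single i (1:ℤ)) : (Fin q → ℤ) ⧸ R) =
        (∑ i : Fin q, y i * (1 + (i:ℤ)*((q:ℤ)+1))) • g0 := by
      rw [Finset.sum_smul]
      refine Finset.sum_congr rfl fun i _ => ?_
      rw [single_eq i, smul_smul]
    rw [hsum]
end
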